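/- Let A be an MV-algebra and G_A the Grothendieck group of the cancellative lattice-ordered monoid M_A of good sequences of A. Then the element u := [(1),(0)], where (1) is the good sequence (¬0, 0, 0, …), is a strong unit of G_A: u ≥ 0, and for every x ∈ G_A there exists n ∈ ℕ with x ≤ n·u. -/

import Mathlib

class MVAlgebra (A : Type*) extends Zero A where
  oplus : A → A → A
  mvneg : A → A
  oplus_assoc : ∀ x y z : A, oplus x (oplus y z) = oplus (oplus x y) z
  oplus_comm : ∀ x y : A, oplus x y = oplus y x
  oplus_zero : ∀ x : A, oplus x 0 = x
  mvneg_mvneg : ∀ x : A, mvneg (mvneg x) = x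
  oplus_mvneg_zero : ∀ x : A, oplus x (mvneg 0) = mvneg 0
  lukasiewicz : ∀ x y : A,
    oplus (mvneg (oplus (mvneg x) y)) y = oplus (mvneg (oplus (mvneg y) x)) x

open MVAlgebra

/-- The derived operation `x ⊙ y := ¬(¬x ⊕ ¬y)`. -/
def MVAlgebra.odot {A : Type*} [MVAlgebra A] (x y : A) : A :=
  mvneg (oplus (mvneg x) (mvneg y))

/-- A good sequence: `aᵢ ⊕ aᵢ₊₁ = aᵢ` for all `i`, and eventually zero. -/
def Good {A : Type*} [MVAlgebra A] (a : ℕ → A) : Prop :=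
  (∀ i, oplus (a i) (a (i + 1)) = a i) ∧ ∃ N, ∀ m, N ≤ m → a m = 0

/-- The sum of (good) sequences:
`(a + b)ₙ = aₙ ⊕ (aₙ₋₁ ⊙ b₀) ⊕ … ⊕ (a₀ ⊙ bₙ₋₁) ⊕ bₙ`. -/
def addGood {A : Type*} [MVAlgebra A] (a b : ℕ → A) : ℕ → A := fun n =>
  ((List.range n).map (fun j => odot (a (n - 1 - j)) (b j))).foldr oplus
    (oplus (a n) (b n))

/-- The natural order of an MV-algebra: `x ≤ y` iff `¬x ⊕ y = ¬0`. -/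
def MVLe {A : Type*} [MVAlgebra A] (x y : A) : Prop :=
  oplus (mvneg x) y = mvneg 0

/-- Pointwise order on sequences. -/
def SeqLe {A : Type*} [MVAlgebra A] (a b : ℕ → A) : Prop := ∀ i, MVLe (a i) (b i)

/-- The zero good sequence. -/
def zeroSeq (A : Type*) [MVAlgebra A] : ℕ → A := fun _ => 0

/-- The good sequence `(1) = (¬0, 0, 0, …)`. -/
def oneSeq (A : Type*) [MVAlgebra A] : ℕ → A := fun i =>
  if i = 0 then mvneg 0 else 0

/-- `n`-fold sum of a good sequence. -/
def nGood {A : Type*} [MVAlgebra A] : ℕ → (ℕ → A) → (ℕ → A)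
  | 0, _ => zeroSeq A
  | n + 1, a => addGood a (nGood n a)

/-- The order on the Grothendieck group `G_A` of the monoid `M_A` of good
sequences, expressed on representing pairs: `[a,b] ≤ [c,d]` iff `a + d ≤ c + b`. -/
def PairLe {A : Type*} [MVAlgebra A] (p q : (ℕ → A) × (ℕ → A)) : Prop :=
  SeqLe (addGood p.1 q.2) (addGood q.1 p.2)

section Aux
variable {A : Type*} [MVAlgebra A]

lemma mv_zero_oplus (x : A) : oplus 0 x = x := by rw [oplus_comm, oplus_zero]

lemma mv_one_oplus (x : A) : oplus (mvneg 0) x = mvneg 0 := by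
  rw [oplus_comm, oplus_mvneg_zero]

lemma mv_odot_zero (x : A) : odot x 0 = 0 := by
  unfold MVAlgebra.odot; rw [oplus_mvneg_zero, mvneg_mvneg]

lemma mv_zero_odot (x : A) : odot 0 x = 0 := by
  unfold MVAlgebra.odot; rw [mv_one_oplus, mvneg_mvneg]

lemma mv_one_odot (x : A) : odot (mvneg 0) x = x := by
  unfold MVAlgebra.odot; rw [mvneg_mvneg, mv_zero_oplus, mvneg_mvneg]

lemma mv_foldr_zero (init : A) :
    ∀ l : List A, (∀ x ∈ l, x = 0) → l.foldr oplus init = init := by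
  intro l
  induction l with
  | nil => intro _; rfl
  | cons x t ih =>
    intro h
    simp only [List.foldr_cons]
    rw [ih (fun y hy => h y (List.mem_cons_of_mem _ hy)),
      h x List.mem_cons_self, mv_zero_oplus]

lemma mv_foldr_top (l : List A) :
    l.foldr oplus (mvneg 0) = mvneg (0 : A) := by
  induction l with
  | nil => rfl
  | cons x t ih => simp only [List.foldr_cons]; rw [ih, oplus_mvneg_zero]

lemma addGood_zero_right (a : ℕ → A) (n : ℕ) : addGood a (zeroSeq A) n = a n := by
  unfold addGood
  rw [mv_foldr_zero]
  · exact oplus_zero _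
  · intro x hx
    simp only [List.mem_map] at hx
    obtain ⟨j, _, rfl⟩ := hx
    exact mv_odot_zero _

lemma addGood_one_zero (c : ℕ → A) : addGood (oneSeq A) c 0 = mvneg 0 := by
  unfold addGood
  simp only [List.range_zero, List.map_nil, List.foldr_nil]
  show oplus (oneSeq A 0) (c 0) = mvneg 0
  rw [show oneSeq A 0 = mvneg 0 from rfl, mv_one_oplus]

lemma addGood_one_succ (c : ℕ → A) (m : ℕ) :
    addGood (oneSeq A) c (m + 1) = oplus (c m) (c (m + 1)) := by
  unfold addGood
  rw [List.range_succ, List.map_append, List.foldr_append]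
  simp only [List.map_cons, List.map_nil, List.foldr_cons, List.foldr_nil]
  rw [mv_foldr_zero]
  · have h1 : oneSeq A (m + 1 - 1 - m) = mvneg 0 := by
      have : m + 1 - 1 - m = 0 := by omega
      rw [this]; rfl
    have h2 : oneSeq A (m + 1) = 0 := by
      show (if m + 1 = 0 then mvneg 0 else 0) = 0
      rw [if_neg (by omega)]
    rw [h1, h2, mv_one_odot, mv_zero_oplus]
  · intro x hx
    simp only [List.mem_map, List.mem_range] at hx
    obtain ⟨j, hj, rfl⟩ := hx
    have : oneSeq A (m + 1 - 1 - j) = 0 := by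
      show (if m + 1 - 1 - j = 0 then mvneg 0 else 0) = 0
      rw [if_neg (by omega)]
    rw [this, mv_zero_odot]

lemma nGood_one_lt (n i : ℕ) (h : i < n) : nGood n (oneSeq A) i = mvneg 0 := by
  induction n generalizing i with
  | zero => omega
  | succ n ih =>
    show addGood (oneSeq A) (nGood n (oneSeq A)) i = mvneg 0
    cases i with
    | zero => exact addGood_one_zero _
    | succ m => rw [addGood_one_succ, ih m (by omega), mv_one_oplus]

lemma addGood_top (c b : ℕ → A) (i : ℕ) (h : c i = mvneg 0) :
    addGood c b i = mvneg 0 := by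
  unfold addGood
  rw [h, mv_one_oplus]
  exact mv_foldr_top _

end Aux

/-- The element `u = [(1),(0)]` is a strong unit of the Grothendieck group `G_A`
of the monoid of good sequences of an MV-algebra `A`: `u ≥ 0`, and every element
`[a,b]` of `G_A` satisfies `[a,b] ≤ n·u` for some natural number `n`. -/
theorem unit_is_strong_in_grothendieck_group (A : Type*) [MVAlgebra A] :
    PairLe ((zeroSeq A, zeroSeq A)) ((oneSeq A, zeroSeq A)) ∧
    ∀ a b : ℕ → A, Good a → Good b →
      ∃ n : ℕ, PairLe ((a, b)) ((nGood n (oneSeq A), zeroSeq A)) := by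
  constructor
  · intro i
    show MVLe (addGood (zeroSeq A) (zeroSeq A) i) (addGood (oneSeq A) (zeroSeq A) i)
    rw [MVLe, addGood_zero_right, addGood_zero_right]
    show oplus (mvneg (0 : A)) (oneSeq A i) = mvneg 0
    exact mv_one_oplus _
  · intro a b ha _hb
    obtain ⟨-, N, hN⟩ := ha
    refine ⟨N, fun i => ?_⟩
    show MVLe (addGood a (zeroSeq A) i) (addGood (nGood N (oneSeq A)) b i)
    rw [MVLe, addGood_zero_right]
    by_cases h : i < N
    · rw [addGood_top _ _ _ (nGood_one_lt N i h)]
      exact oplus_mvneg_zero _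
    · rw [hN i (by omega)]
      exact mv_one_oplus _
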